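/- Let G be a group and K a normal subgroup of G. Then G/K is isoclinic to G/(K ∩ [G,G]). -/

import Mathlib

open scoped commutatorElement

theorem mem_commutator_of {G : Type} [Group G] (g₁ g₂ : G) : ⁅g₁, g₂⁆ ∈ commutator G := by
  rw [commutator_def]
  exact Subgroup.commutator_mem_commutator (Subgroup.mem_top _) (Subgroup.mem_top _)

/-- Two groups are isoclinic. -/
def IsIsoclinic (G H : Type) [Group G] [Group H] : Prop :=
  ∃ (ζ : (G ⧸ Subgroup.center G) ≃* (H ⧸ Subgroup.center H))
    (η : (commutator G) ≃* (commutator H)),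
    ∀ (g₁ g₂ : G) (h₁ h₂ : H),
      ζ ((g₁ : G) : G ⧸ Subgroup.center G) = ((h₁ : H) : H ⧸ Subgroup.center H) →
      ζ ((g₂ : G) : G ⧸ Subgroup.center G) = ((h₂ : H) : H ⧸ Subgroup.center H) →
      η ⟨⁅g₁, g₂⁆, mem_commutator_of g₁ g₂⟩ = ⟨⁅h₁, h₂⁆, mem_commutator_of h₁ h₂⟩

/-- Commutators only depend on cosets of the center. -/
lemma commutator_eq_of_center {H : Type} [Group H] {a b c d : H}
    (h1 : ((a : H ⧸ Subgroup.center H)) = b) (h2 : ((c : H ⧸ Subgroup.center H)) = d) :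
    ⁅a, c⁆ = ⁅b, d⁆ := by
  have hz : a⁻¹ * b ∈ Subgroup.center H := QuotientGroup.eq.mp h1
  have hw : c⁻¹ * d ∈ Subgroup.center H := QuotientGroup.eq.mp h2
  have hzc := Subgroup.mem_center_iff.mp hz
  have hwc := Subgroup.mem_center_iff.mp hw
  set z := a⁻¹ * b with hzdef
  set w := c⁻¹ * d with hwdef
  have hb : b = a * z := by rw [hzdef]; group
  have hd : d = c * w := by rw [hwdef]; group
  have key : ⁅a * z, c * w⁆ = ⁅a, c⁆ := by
    simp only [commutatorElement_def, mul_inv_rev]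
    calc a * z * (c * w) * (z⁻¹ * a⁻¹) * (w⁻¹ * c⁻¹)
        = a * (z * (c * w) * z⁻¹) * (a⁻¹ * w⁻¹) * c⁻¹ := by group
      _ = a * (c * w) * (a⁻¹ * w⁻¹) * c⁻¹ := by rw [← hzc (c * w)]; group
      _ = a * c * (w * a⁻¹ * w⁻¹) * c⁻¹ := by group
      _ = a * c * a⁻¹ * c⁻¹ := by rw [← hwc a⁻¹]; group
  rw [hb, hd, key]

theorem stmt0 (G : Type) [Group G] (K : Subgroup G) [K.Normal] :
    IsIsoclinic (G ⧸ K) (G ⧸ (K ⊓ commutator G)) := by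
  set N : Subgroup G := K ⊓ commutator G with hN
  have hle : N ≤ Subgroup.comap (MonoidHom.id G) K := fun x hx => hx.1
  let φ : G ⧸ N →* G ⧸ K := QuotientGroup.map N K (MonoidHom.id G) hle
  have hφmk : ∀ g : G, φ ((g : G ⧸ N)) = (g : G ⧸ K) := fun g => rfl
  have hφsurj : Function.Surjective φ := by
    intro y
    exact QuotientGroup.induction_on y (fun g => ⟨(g : G ⧸ N), rfl⟩)
  let ψ : G ⧸ N →* (G ⧸ K) ⧸ Subgroup.center (G ⧸ K) :=
    (QuotientGroup.mk' (Subgroup.center (G ⧸ K))).comp φ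
  have hψsurj : Function.Surjective ψ :=
    (QuotientGroup.mk'_surjective _).comp hφsurj
  have hker : ψ.ker = Subgroup.center (G ⧸ N) := by
    ext x
    refine QuotientGroup.induction_on x (fun a => ?_)
    constructor
    · intro hx
      have hx1 : ψ ((a : G ⧸ N)) = 1 := hx
      have hc : ((a : G ⧸ K)) ∈ Subgroup.center (G ⧸ K) :=
        (QuotientGroup.eq_one_iff _).mp hx1
      rw [Subgroup.mem_center_iff]
      intro y
      refine QuotientGroup.induction_on y (fun b => ?_)
      have h1 : ((b * a : G) : G ⧸ N) = ((a * b : G) : G ⧸ N) := by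
        rw [QuotientGroup.eq]
        constructor
        · have hK : ((b * a : G) : G ⧸ K) = ((a * b : G) : G ⧸ K) := by
            have h := Subgroup.mem_center_iff.mp hc ((b : G ⧸ K))
            simpa [QuotientGroup.mk_mul] using h
          exact QuotientGroup.eq.mp hK
        · show (b * a)⁻¹ * (a * b) ∈ commutator G
          have he : (b * a)⁻¹ * (a * b) = ⁅a⁻¹, b⁻¹⁆ := by group
          rw [he]
          exact mem_commutator_of _ _
      simpa [QuotientGroup.mk_mul] using h1
    · intro hx
      show ψ ((a : G ⧸ N)) = 1
      have hx2 : ((a : G ⧸ K)) ∈ Subgroup.center (G ⧸ K) := by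
        rw [Subgroup.mem_center_iff]
        intro y
        refine QuotientGroup.induction_on y (fun b => ?_)
        have h := Subgroup.mem_center_iff.mp hx ((b : G ⧸ N))
        have h2 : φ ((b : G ⧸ N) * (a : G ⧸ N)) = φ ((a : G ⧸ N) * (b : G ⧸ N)) := by rw [h]
        simpa [QuotientGroup.mk_mul, hφmk] using h2
      exact (QuotientGroup.eq_one_iff _).mpr hx2
  let ζ' : (G ⧸ N) ⧸ Subgroup.center (G ⧸ N) ≃* (G ⧸ K) ⧸ Subgroup.center (G ⧸ K) :=
    (QuotientGroup.quotientMulEquivOfEq hker.symm).trans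
      (QuotientGroup.quotientKerEquivOfSurjective ψ hψsurj)
  have hζ' : ∀ x : G ⧸ N, ζ' ((x : (G ⧸ N) ⧸ Subgroup.center (G ⧸ N)))
      = ((φ x : G ⧸ K) : (G ⧸ K) ⧸ Subgroup.center (G ⧸ K)) := fun x => rfl
  have hcommK : commutator (G ⧸ K) = Subgroup.map (QuotientGroup.mk' K) (commutator G) := by
    have h := Subgroup.map_commutator (⊤ : Subgroup G) ⊤ (QuotientGroup.mk' K)
    rw [Subgroup.map_top_of_surjective _ (QuotientGroup.mk'_surjective K)] at h
    exact h.symm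
  have hcommN : commutator (G ⧸ N) = Subgroup.map (QuotientGroup.mk' N) (commutator G) := by
    have h := Subgroup.map_commutator (⊤ : Subgroup G) ⊤ (QuotientGroup.mk' N)
    rw [Subgroup.map_top_of_surjective _ (QuotientGroup.mk'_surjective N)] at h
    exact h.symm
  have hmapsto : ∀ x : G ⧸ N, x ∈ commutator (G ⧸ N) → φ x ∈ commutator (G ⧸ K) := by
    intro x hx
    rw [hcommN] at hx
    obtain ⟨a, ha, rfl⟩ := hx
    rw [hcommK]
    exact ⟨a, ha, rfl⟩
  let f : commutator (G ⧸ N) →* commutator (G ⧸ K) :=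
    (φ.comp (commutator (G ⧸ N)).subtype).codRestrict _ (fun x => hmapsto x x.2)
  have hf : ∀ x : commutator (G ⧸ N), (f x : G ⧸ K) = φ (x : G ⧸ N) := fun x => rfl
  have hfinj : Function.Injective f := by
    intro x y hxy
    have hx := hcommN.le x.2
    have hy := hcommN.le y.2
    obtain ⟨a, ha, hax⟩ := hx
    obtain ⟨b, hb, hby⟩ := hy
    have h1 : φ (x : G ⧸ N) = φ (y : G ⧸ N) := by rw [← hf, ← hf, hxy]
    refine Subtype.ext ?_
    rw [← hax, ← hby]
    rw [← hax, ← hby] at h1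
    have h2 : ((a : G ⧸ K)) = ((b : G ⧸ K)) := h1
    rw [QuotientGroup.eq] at h2
    show ((a : G ⧸ N)) = ((b : G ⧸ N))
    rw [QuotientGroup.eq]
    exact ⟨h2, (commutator G).mul_mem (inv_mem ha) hb⟩
  have hfsurj : Function.Surjective f := by
    intro y
    have hy := hcommK.le y.2
    obtain ⟨a, ha, hay⟩ := hy
    refine ⟨⟨(a : G ⧸ N), by rw [hcommN]; exact ⟨a, ha, rfl⟩⟩, Subtype.ext ?_⟩
    show φ ((a : G ⧸ N)) = (y : G ⧸ K)
    rw [hφmk]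
    exact hay
  let η' : commutator (G ⧸ N) ≃* commutator (G ⧸ K) :=
    MulEquiv.ofBijective f ⟨hfinj, hfsurj⟩
  have hη' : ∀ x : commutator (G ⧸ N), (η' x : G ⧸ K) = φ (x : G ⧸ N) := fun x => rfl
  refine ⟨ζ'.symm, η'.symm, ?_⟩
  intro g₁ g₂ h₁ h₂ hg1 hg2
  rw [MulEquiv.symm_apply_eq] at hg1 hg2
  rw [hζ' h₁] at hg1
  rw [hζ' h₂] at hg2
  rw [MulEquiv.symm_apply_eq]
  have key : η' ⟨⁅h₁, h₂⁆, mem_commutator_of h₁ h₂⟩ =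
      ⟨⁅g₁, g₂⁆, mem_commutator_of g₁ g₂⟩ := by
    refine Subtype.ext ?_
    show φ ⁅h₁, h₂⁆ = ⁅g₁, g₂⁆
    rw [map_commutatorElement]
    exact (commutator_eq_of_center hg1 hg2).symm
  rw [key]
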